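/- arXiv:1305.1739 — 2 statements merged into one kernel-verified Lean document; each statement's English description precedes it below -/
import Mathlib

section
/- Let g₁ be a symmetric bilinear form on ℝ⁴ of Lorentzian signature (3,1) (three positive, one negative eigenvalue), and let g₂ be any symmetric bilinear form on ℝ⁴ such that g₂(v,v) = 0 for every v with g₁(v,v) = 0. Then there exists c ∈ ℝ with g₂ = c·g₁. In particular, two Lorentzian forms with the same null cone are proportional. -/
open Matrix

private lemma quad_congr (P A : Matrix (Fin 4) (Fin 4) ℝ) (v : Fin 4 → ℝ) :
    dotProduct (P.mulVec v) (A.mulVec (P.mulVec v)) =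
      dotProduct v ((Pᵀ*A*P).mulVec v) := by
  symm
  rw [← Matrix.mulVec_mulVec, ← Matrix.mulVec_mulVec, Matrix.dotProduct_mulVec,
    Matrix.vecMul_transpose]

set_option maxHeartbeats 1000000 in
private lemma minkowski_null (H : Matrix (Fin 4) (Fin 4) ℝ)
    (hs : ∀ i j, H i j = H j i)
    (hnull' : ∀ v : Fin 4 → ℝ,
      dotProduct v ((Matrix.diagonal ![(-1 : ℝ), 1, 1, 1]).mulVec v) = 0 →
      dotProduct v (H.mulVec v) = 0) :
    H = (H 1 1) • Matrix.diagonal ![(-1 : ℝ), 1, 1, 1] := by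
  have e1 := hnull' ![1,1,0,0] (by
    simp [dotProduct, Matrix.mulVec, Matrix.diagonal, Fin.sum_univ_four])
  have e1' := hnull' ![1,-1,0,0] (by
    simp [dotProduct, Matrix.mulVec, Matrix.diagonal, Fin.sum_univ_four])
  have e2 := hnull' ![1,0,1,0] (by
    simp [dotProduct, Matrix.mulVec, Matrix.diagonal, Fin.sum_univ_four])
  have e2' := hnull' ![1,0,-1,0] (by
    simp [dotProduct, Matrix.mulVec, Matrix.diagonal, Fin.sum_univ_four])
  have e3 := hnull' ![1,0,0,1] (by
    simp [dotProduct, Matrix.mulVec, Matrix.diagonal, Fin.sum_univ_four])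
  have e3' := hnull' ![1,0,0,-1] (by
    simp [dotProduct, Matrix.mulVec, Matrix.diagonal, Fin.sum_univ_four])
  have f12 := hnull' ![3,2,2,1] (by
    simp [dotProduct, Matrix.mulVec, Matrix.diagonal, Fin.sum_univ_four]; ring)
  have f13 := hnull' ![3,2,1,2] (by
    simp [dotProduct, Matrix.mulVec, Matrix.diagonal, Fin.sum_univ_four]; ring)
  have f23 := hnull' ![3,1,2,2] (by
    simp [dotProduct, Matrix.mulVec, Matrix.diagonal, Fin.sum_univ_four]; ring)
  simp only [dotProduct, Matrix.mulVec, Fin.sum_univ_four, Matrix.cons_val_zero,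
    Matrix.cons_val_one, Matrix.head_cons, Matrix.cons_val_two, Matrix.tail_cons,
    Matrix.cons_val_three] at e1 e1' e2 e2' e3 e3' f12 f13 f23
  ext i j
  fin_cases i <;> fin_cases j <;>
    simp [Matrix.diagonal] <;>
    linarith [hs 0 1, hs 0 2, hs 0 3, hs 1 2, hs 1 3, hs 2 3,
      e1, e1', e2, e2', e3, e3', f12, f13, f23]

/-- Two symmetric bilinear forms on ℝ⁴ (represented by symmetric matrices), where the
first has Lorentzian signature (3,1), having the property that the second vanishes on
the null cone of the first, are proportional. In particular two Lorentzian forms with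
the same light cone are proportional. -/
theorem same_null_cone_implies_proportional (G₁ G₂ : Matrix (Fin 4) (Fin 4) ℝ)
    (hG₁ : G₁.IsSymm) (hG₂ : G₂.IsSymm)
    (hsig : ∃ P : Matrix (Fin 4) (Fin 4) ℝ, IsUnit P.det ∧
      P.transpose * G₁ * P = Matrix.diagonal ![(-1 : ℝ), 1, 1, 1])
    (hnull : ∀ v : Fin 4 → ℝ,
      dotProduct v (G₁.mulVec v) = 0 → dotProduct v (G₂.mulVec v) = 0) :
    ∃ c : ℝ, G₂ = c • G₁ := by
  obtain ⟨P, hPdet, hP⟩ := hsig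
  haveI := P.invertibleOfIsUnitDet hPdet
  have hs : ∀ i j, (Pᵀ * G₂ * P) i j = (Pᵀ * G₂ * P) j i := by
    intro i j
    have h : (Pᵀ * G₂ * P)ᵀ = Pᵀ * G₂ * P := by
      simp [Matrix.transpose_mul, hG₂.eq, Matrix.mul_assoc]
    conv_lhs => rw [← h]
    rfl
  have hnull' : ∀ v : Fin 4 → ℝ,
      dotProduct v ((Matrix.diagonal ![(-1 : ℝ), 1, 1, 1]).mulVec v) = 0 →
      dotProduct v ((Pᵀ * G₂ * P).mulVec v) = 0 := by
    intro v hv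
    rw [← quad_congr]
    apply hnull
    rw [quad_congr, hP]
    exact hv
  have hHform := minkowski_null (Pᵀ * G₂ * P) hs hnull'
  refine ⟨(Pᵀ * G₂ * P) 1 1, ?_⟩
  have key : Pᵀ * G₂ * P = Pᵀ * (((Pᵀ * G₂ * P) 1 1) • G₁) * P := by
    rw [Matrix.mul_smul, Matrix.smul_mul, hP]
    exact hHform
  have h2 : Pᵀ * G₂ = Pᵀ * (((Pᵀ * G₂ * P) 1 1) • G₁) :=
    Matrix.mul_left_injective_of_invertible P key
  exact Matrix.mul_right_injective_of_invertible Pᵀ h2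
end

section
/- Let m = diag(-1,1,1,1) be the Minkowski metric on ℝ⁴ and let ξ ∈ ℝ⁴ be a nonzero lightlike covector (m^{ab}ξ_aξ_b = 0). Define the linear map Φ from the 10-dimensional space of symmetric 4×4 real matrices to ℝ⁴ by Φ(v)_j = m^{mn} ξ_m v_{nj} - (1/2) ξ_j (m^{pq} v_{pq}). Then Φ is surjective, and its kernel (the space of symmetric tensors satisfying the divergence condition for principal symbols at ξ) has dimension 6. -/
/-- The inverse Minkowski metric diag(-1,1,1,1). -/
def eta : Fin 4 → Fin 4 → ℝ := fun m n => if m = n then (if m = 0 then -1 else 1) else 0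

/-- The divergence-condition map on symmetric tensors at a covector ξ:
`Φ(v)_j = m^{mn} ξ_m v_{nj} - (1/2) ξ_j m^{pq} v_{pq}`. -/
noncomputable def Phi (ξ : Fin 4 → ℝ) (v : Matrix (Fin 4) (Fin 4) ℝ) : Fin 4 → ℝ :=
  fun j => (∑ m, ∑ n, eta m n * ξ m * v n j) - (1 / 2) * ξ j * (∑ p, ∑ q, eta p q * v p q)

lemma phi_apply (ξ : Fin 4 → ℝ) (v : Matrix (Fin 4) (Fin 4) ℝ) (j : Fin 4) :
    Phi ξ v j = (-(ξ 0 * v 0 j) + ξ 1 * v 1 j + ξ 2 * v 2 j + ξ 3 * v 3 j)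
      - (1/2) * ξ j * (-(v 0 0) + v 1 1 + v 2 2 + v 3 3) := by
  simp [Phi, eta, Fin.sum_univ_four]

/-- `Phi` as a linear map. -/
noncomputable def PhiL (ξ : Fin 4 → ℝ) : Matrix (Fin 4) (Fin 4) ℝ →ₗ[ℝ] (Fin 4 → ℝ) where
  toFun := Phi ξ
  map_add' := by
    intro v w
    funext j
    simp only [Pi.add_apply, phi_apply, Matrix.add_apply]
    ring
  map_smul' := by
    intro c v
    funext j
    simp only [Pi.smul_apply, phi_apply, Matrix.smul_apply, smul_eq_mul, RingHom.id_apply]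
    ring

lemma phi_smul (ξ : Fin 4 → ℝ) (c : ℝ) (v : Matrix (Fin 4) (Fin 4) ℝ) :
    Phi ξ (c • v) = c • Phi ξ v := (PhiL ξ).map_smul c v

lemma eta_symm (i j : Fin 4) : eta i j = eta j i := by
  fin_cases i <;> fin_cases j <;> rfl

def nvec (ξ : Fin 4 → ℝ) : Fin 4 → ℝ := ![ξ 0, -ξ 1, -ξ 2, -ξ 3]

/-- Polynomial part of the explicit preimage of `u` under `Phi ξ`. -/
noncomputable def mMat (ξ u : Fin 4 → ℝ) : Matrix (Fin 4) (Fin 4) ℝ :=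
  Matrix.of fun i j =>
    -2 * ξ 0 ^ 2 * (u i * nvec ξ j + nvec ξ i * u j)
    - (-(ξ 0 * u 0) + ξ 1 * u 1 + ξ 2 * u 2 + ξ 3 * u 3) * (nvec ξ i * nvec ξ j)
    + 2 * ξ 0 ^ 2 * (-(ξ 0 * u 0) - ξ 1 * u 1 - ξ 2 * u 2 - ξ 3 * u 3) * eta i j

lemma mMat_isSymm (ξ u : Fin 4 → ℝ) : (mMat ξ u).IsSymm := by
  refine Matrix.IsSymm.ext fun i j => ?_
  simp only [mMat, Matrix.of_apply]
  rw [eta_symm j i]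
  ring

lemma phi_mMat (ξ u : Fin 4 → ℝ)
    (hl : ξ 0 ^ 2 = ξ 1 ^ 2 + ξ 2 ^ 2 + ξ 3 ^ 2) (j : Fin 4) :
    Phi ξ (mMat ξ u) j = 4 * ξ 0 ^ 4 * u j := by
  fin_cases j
  · show Phi ξ (mMat ξ u) 0 = 4 * ξ 0 ^ 4 * u 0
    rw [phi_apply]
    simp (config := { decide := true }) only [mMat, nvec, eta, Matrix.of_apply, Fin.isValue,
      Matrix.cons_val_zero, Matrix.cons_val_one, Matrix.head_cons, if_true, if_false,
      Matrix.cons_val_two, Matrix.cons_val_three, Matrix.tail_cons]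
    norm_num
    linear_combination ((-3/2) * ξ 0 * ξ 3 * u 3 + (-3/2) * ξ 0 * ξ 2 * u 2
      + (-3/2) * ξ 0 * ξ 1 * u 1 + (-1/2) * ξ 0 ^ 2 * u 0) * hl
  · show Phi ξ (mMat ξ u) 1 = 4 * ξ 0 ^ 4 * u 1
    rw [phi_apply]
    simp (config := { decide := true }) only [mMat, nvec, eta, Matrix.of_apply, Fin.isValue,
      Matrix.cons_val_zero, Matrix.cons_val_one, Matrix.head_cons, if_true, if_false,
      Matrix.cons_val_two, Matrix.cons_val_three, Matrix.tail_cons]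
    norm_num
    linear_combination ((1/2) * ξ 1 * ξ 3 * u 3 + (1/2) * ξ 1 * ξ 2 * u 2
      + (1/2) * ξ 1 ^ 2 * u 1 + (-1/2) * ξ 0 * ξ 1 * u 0 + (-2) * ξ 0 ^ 2 * u 1) * hl
  · show Phi ξ (mMat ξ u) 2 = 4 * ξ 0 ^ 4 * u 2
    rw [phi_apply]
    simp (config := { decide := true }) only [mMat, nvec, eta, Matrix.of_apply, Fin.isValue,
      Matrix.cons_val_zero, Matrix.cons_val_one, Matrix.head_cons, if_true, if_false,
      Matrix.cons_val_two, Matrix.cons_val_three, Matrix.tail_cons]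
    norm_num
    linear_combination ((1/2) * ξ 2 * ξ 3 * u 3 + (1/2) * ξ 2 ^ 2 * u 2
      + (1/2) * ξ 1 * ξ 2 * u 1 + (-1/2) * ξ 0 * ξ 2 * u 0 + (-2) * ξ 0 ^ 2 * u 2) * hl
  · show Phi ξ (mMat ξ u) 3 = 4 * ξ 0 ^ 4 * u 3
    rw [phi_apply]
    simp (config := { decide := true }) only [mMat, nvec, eta, Matrix.of_apply, Fin.isValue,
      Matrix.cons_val_zero, Matrix.cons_val_one, Matrix.head_cons, if_true, if_false,
      Matrix.cons_val_two, Matrix.cons_val_three, Matrix.tail_cons]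
    norm_num
    linear_combination ((1/2) * ξ 3 ^ 2 * u 3 + (1/2) * ξ 2 * ξ 3 * u 2
      + (1/2) * ξ 1 * ξ 3 * u 1 + (-1/2) * ξ 0 * ξ 3 * u 0 + (-2) * ξ 0 ^ 2 * u 3) * hl

/-- The submodule of symmetric matrices. -/
def symSub : Submodule ℝ (Matrix (Fin 4) (Fin 4) ℝ) where
  carrier := {v | v.IsSymm}
  add_mem' := fun ha hb => ha.add hb
  zero_mem' := by simp [Matrix.IsSymm]
  smul_mem' := fun c v hv => by
    simpa [Matrix.IsSymm, Matrix.transpose_smul] using congrArg (c • ·) hv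

/-- index pairs -/
def ent : Fin 10 → Fin 4 × Fin 4 :=
  ![(0,0),(0,1),(0,2),(0,3),(1,1),(1,2),(1,3),(2,2),(2,3),(3,3)]

def tIdx : Fin 4 → Fin 4 → Fin 10 :=
  fun i j => ![![0,1,2,3],![1,4,5,6],![2,5,7,8],![3,6,8,9]] i j

lemma tIdx_symm (i j : Fin 4) : tIdx j i = tIdx i j := by revert i j; decide

/-- Symmetric 4×4 matrices are linearly equivalent to ℝ¹⁰. -/
noncomputable def symEquiv : symSub ≃ₗ[ℝ] (Fin 10 → ℝ) where
  toFun := fun x i => (x : Matrix (Fin 4) (Fin 4) ℝ) (ent i).1 (ent i).2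
  map_add' := fun a b => rfl
  map_smul' := fun c a => rfl
  invFun := fun f => ⟨Matrix.of fun i j => f (tIdx i j), Matrix.IsSymm.ext fun i j => by
    simp [Matrix.of_apply, tIdx_symm]⟩
  left_inv := by
    rintro ⟨x, hx⟩
    apply Subtype.ext
    ext i j
    fin_cases i <;> fin_cases j <;> first | rfl | exact hx.apply _ _
  right_inv := by
    intro f
    funext i
    fin_cases i <;> rfl

/-- The restriction of `PhiL` to symmetric matrices. -/
noncomputable def Lmap (ξ : Fin 4 → ℝ) : symSub →ₗ[ℝ] (Fin 4 → ℝ) :=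
  (PhiL ξ).comp symSub.subtype

lemma finrank_symSub : Module.finrank ℝ symSub = 10 := by
  rw [symEquiv.finrank_eq, Module.finrank_fin_fun]

noncomputable instance (ξ : Fin 4 → ℝ) : Module.Free ℝ ↥(LinearMap.ker (Lmap ξ)) :=
  Module.Free.of_divisionRing ℝ ↥(LinearMap.ker (Lmap ξ))

set_option maxHeartbeats 2000000 in
set_option synthInstance.maxHeartbeats 1000000 in
/-- For a nonzero lightlike covector ξ, the map Φ is surjective from symmetric 4×4
matrices onto ℝ⁴, and its kernel (the symmetric tensors satisfying the divergence
condition for principal symbols at ξ) has dimension 6. -/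
theorem divergence_condition_surjective_and_kernel_dim_six
    (ξ : Fin 4 → ℝ) (hξ : ξ ≠ 0)
    (hlight : ∑ m, ∑ n, eta m n * ξ m * ξ n = 0) :
    (∀ y : Fin 4 → ℝ, ∃ v : Matrix (Fin 4) (Fin 4) ℝ, v.IsSymm ∧ Phi ξ v = y) ∧
    (∃ b : Fin 6 → Matrix (Fin 4) (Fin 4) ℝ, LinearIndependent ℝ b ∧
      (∀ i, (b i).IsSymm ∧ Phi ξ (b i) = 0) ∧
      (∀ v : Matrix (Fin 4) (Fin 4) ℝ, v.IsSymm → Phi ξ v = 0 →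
        ∃ c : Fin 6 → ℝ, v = ∑ i, c i • b i)) := by
  have hl : ξ 0 ^ 2 = ξ 1 ^ 2 + ξ 2 ^ 2 + ξ 3 ^ 2 := by
    simp [eta, Fin.sum_univ_four] at hlight
    nlinarith [hlight]
  have ht : ξ 0 ≠ 0 := by
    intro h0
    apply hξ
    have h1 : ξ 1 = 0 := by nlinarith [sq_nonneg (ξ 1), sq_nonneg (ξ 2), sq_nonneg (ξ 3)]
    have h2 : ξ 2 = 0 := by nlinarith [sq_nonneg (ξ 1), sq_nonneg (ξ 2), sq_nonneg (ξ 3)]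
    have h3 : ξ 3 = 0 := by nlinarith [sq_nonneg (ξ 1), sq_nonneg (ξ 2), sq_nonneg (ξ 3)]
    funext i
    fin_cases i <;> simpa
  have hk : (4 : ℝ) * ξ 0 ^ 4 ≠ 0 := by positivity
  have hsurj : ∀ y : Fin 4 → ℝ, ∃ v : Matrix (Fin 4) (Fin 4) ℝ, v.IsSymm ∧ Phi ξ v = y := by
    intro u
    refine ⟨(4 * ξ 0 ^ 4)⁻¹ • mMat ξ u, (mMat_isSymm ξ u).smul _, ?_⟩
    funext j
    rw [phi_smul]
    simp only [Pi.smul_apply, smul_eq_mul, phi_mMat ξ u hl j]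
    field_simp
  refine ⟨hsurj, ?_⟩
  -- the restricted linear map
  have hLsurj : Function.Surjective (Lmap ξ) := by
    intro y
    obtain ⟨v, hv, hPv⟩ := hsurj y
    exact ⟨⟨v, hv⟩, hPv⟩
  have hrange : LinearMap.range (Lmap ξ) = ⊤ := LinearMap.range_eq_top.mpr hLsurj
  have hker : Module.finrank ℝ (LinearMap.ker (Lmap ξ)) = 6 := by
    have := LinearMap.finrank_range_add_finrank_ker (Lmap ξ)
    rw [hrange, finrank_symSub] at this
    simp only [finrank_top, Module.finrank_fin_fun] at this
    omega
  let B := Module.finBasisOfFinrankEq ℝ (LinearMap.ker (Lmap ξ)) hker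
  let J : LinearMap.ker (Lmap ξ) →ₗ[ℝ] Matrix (Fin 4) (Fin 4) ℝ :=
    symSub.subtype.comp (LinearMap.ker (Lmap ξ)).subtype
  have hJinj : Function.Injective J := by
    intro a b hab
    exact Subtype.ext (Subtype.ext hab)
  refine ⟨fun i => J (B i), ?_, ?_, ?_⟩
  · have h1 := B.linearIndependent
    exact LinearIndependent.map_injOn (M := LinearMap.ker (Lmap ξ)) (M' := Matrix (Fin 4) (Fin 4) ℝ)
      (v := ⇑B) (R := ℝ) h1 J hJinj.injOn
  · intro i
    refine ⟨((B i : symSub)).2, ?_⟩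
    exact (B i).2
  · intro v hv h0
    have hmem : (⟨⟨v, hv⟩, h0⟩ : LinearMap.ker (Lmap ξ)) ∈ (⊤ : Submodule ℝ _) := trivial
    set xel : LinearMap.ker (Lmap ξ) := ⟨⟨v, hv⟩, h0⟩ with hx
    refine ⟨fun i => B.repr xel i, ?_⟩
    have hrep : xel = ∑ i, B.repr xel i • B i := (B.sum_repr xel).symm
    have : J xel = J (∑ i, B.repr xel i • B i) := congrArg J hrep
    rw [map_sum] at this
    have hJ : J xel = v := rfl
    rw [hJ] at this
    simpa only [map_smul] using this
end
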